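/- For integers 2 ≤ k+1 < j ≤ n, the sum D := Σ_{s=k-1}^{n-3} C(j-3,k-1)·C(n-j,s-k+1)·[1/C(n-1,s) + 1/C(n-1,s+1)] equals n(j-k-1)/((j-2)(j-1)). -/

import Mathlib

-- key reciprocal identity
lemma sti_real_key (m r : ℕ) (h : r + 1 ≤ m) :
    (1:ℝ)/(m.choose r) + 1/(m.choose (r+1)) = ((m:ℝ)+1)/((m:ℝ) * ((m-1).choose r)) := by
  have hm : 1 ≤ m := by omega
  have hr : r ≤ m := by omega
  have hr1 : r ≤ m - 1 := by omega
  have pa : 0 < m.choose r := Nat.choose_pos hr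
  have pb : 0 < m.choose (r+1) := Nat.choose_pos h
  have pc : 0 < (m-1).choose r := Nat.choose_pos hr1
  have h1 : (m-1).choose r * m = m.choose r * (m - r) := by
    have := Nat.choose_mul_succ_eq (m-1) r
    rw [show m - 1 + 1 = m from by omega] at this
    exact this
  have h2 : m.choose (r+1) * (m+1) = (m+1).choose (r+1) * (m - r) := by
    have := Nat.choose_mul_succ_eq m (r+1)
    rw [show m + 1 - (r+1) = m - r from by omega] at this
    exact this
  have hp : (m+1).choose (r+1) = m.choose r + m.choose (r+1) := Nat.choose_succ_succ m r
  rw [hp] at h2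
  have h1' : ((m-1).choose r : ℝ) * m = (m.choose r : ℝ) * ((m:ℝ) - r) := by
    have := congrArg (Nat.cast (R := ℝ)) h1
    push_cast [Nat.cast_sub hr] at this
    linarith [this]
  have h2' : (m.choose (r+1) : ℝ) * ((m:ℝ)+1)
      = ((m.choose r : ℝ) + m.choose (r+1)) * ((m:ℝ) - r) := by
    have := congrArg (Nat.cast (R := ℝ)) h2
    push_cast [Nat.cast_sub hr] at this
    linarith [this]
  have pa' : (m.choose r : ℝ) ≠ 0 := by positivity
  have pb' : (m.choose (r+1) : ℝ) ≠ 0 := by positivity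
  have pc' : ((m-1).choose r : ℝ) ≠ 0 := by positivity
  have pm : (m:ℝ) ≠ 0 := by positivity
  field_simp
  nlinarith [h1', h2', sq_nonneg ((m.choose r : ℝ))]

lemma sti_aux (q : ℕ) : ∀ p r : ℕ, p + r ≤ q →
    ∑ t ∈ Finset.range (p+1), ((p.choose t : ℝ) / (q.choose (t+r))) =
      ((q:ℝ)+1) / ((((q:ℝ)+1) - p) * ((q-p).choose r)) := by
  intro p
  induction p with
  | zero =>
      intro r h
      have hc : 0 < q.choose r := Nat.choose_pos (by omega)
      have hc' : (q.choose r : ℝ) ≠ 0 := by positivity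
      have hq : ((q:ℝ)+1) ≠ 0 := by positivity
      simp only [Finset.sum_range_one, Nat.choose_self, Nat.choose_zero_right,
        Nat.cast_one, Nat.cast_zero, Nat.sub_zero, zero_add, sub_zero]
      field_simp
  | succ p ih =>
      intro r h
      have hq1 : p + r ≤ q := by omega
      have hq2 : p + (r+1) ≤ q := by omega
      have key : ∀ t, (((p+1).choose (t+1) : ℝ) / (q.choose (t+1+r)))
          = (p.choose t : ℝ) / (q.choose (t+(r+1))) + (p.choose (t+1) : ℝ) / (q.choose ((t+1)+r)) := by
        intro t
        rw [Nat.choose_succ_succ]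
        push_cast
        rw [add_div]
        rw [show t+(r+1) = t+1+r from by omega]
      rw [Finset.sum_range_succ']
      simp only [key]
      rw [Finset.sum_add_distrib]
      have shift : ∑ t ∈ Finset.range (p+1), ((p.choose (t+1) : ℝ) / (q.choose ((t+1)+r)))
          = (∑ t ∈ Finset.range (p+1), ((p.choose t : ℝ) / (q.choose (t+r))))
              - (p.choose 0 : ℝ) / (q.choose (0+r)) := by
        have A := Finset.sum_range_succ' (fun t => ((p.choose t : ℝ) / (q.choose (t+r)))) (p+1)
        have B := Finset.sum_range_succ (fun t => ((p.choose t : ℝ) / (q.choose (t+r)))) (p+1)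
        simp only [Nat.choose_succ_self, Nat.cast_zero, zero_div] at B
        simp only [B] at A
        linarith [A]
      rw [shift]
      rw [ih r hq1, ih (r+1) hq2]
      simp only [Nat.cast_zero, zero_div, add_zero, Nat.choose_zero_right, Nat.cast_one, zero_add]
      -- now pure algebra
      have hm : r + 1 ≤ q - p := by omega
      have hkey := sti_real_key (q-p) r hm
      have e1 : (q - p - 1 : ℕ) = q - (p+1) := by omega
      rw [e1] at hkey
      have hcast : ((q-p : ℕ) : ℝ) = (q:ℝ) - p := by
        have : p ≤ q := by omega
        push_cast [Nat.cast_sub this]; ring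
      have h1 : (0:ℝ) < (q:ℝ) - p := by
        have : p + 1 ≤ q := by omega
        have := Nat.cast_le (α := ℝ).2 this
        push_cast at this; linarith
      have pa : (0:ℝ) < ((q-p).choose r : ℝ) := by
        exact_mod_cast Nat.choose_pos (by omega : r ≤ q - p)
      have pb : (0:ℝ) < ((q-p).choose (r+1) : ℝ) := by
        exact_mod_cast Nat.choose_pos hm
      have pc : (0:ℝ) < ((q-(p+1)).choose r : ℝ) := by
        exact_mod_cast Nat.choose_pos (by omega : r ≤ q - (p+1))
      rw [hcast] at hkey
      have goal2 : ((q:ℝ)+1) / ((((q:ℝ)+1) - p) * ((q-p).choose (r+1)))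
            + ((q:ℝ)+1) / ((((q:ℝ)+1) - p) * ((q-p).choose r))
          = ((q:ℝ)+1) / ((((q:ℝ)+1) - (p+1)) * ((q-(p+1)).choose r)) := by
        have e2 : ((q:ℝ)+1) - p = ((q:ℝ) - p) + 1 := by ring
        have e3 : ((q:ℝ)+1) - ((p:ℝ)+1) = (q:ℝ) - p := by ring
        rw [e2, e3]
        rw [div_add_div _ _ (by positivity) (by positivity)]
        rw [div_eq_div_iff (by positivity) (by positivity)]
        have hk' : (1:ℝ)/((q-p).choose r) + 1/((q-p).choose (r+1))
            = (((q:ℝ)-p)+1)/(((q:ℝ)-p) * ((q-(p+1)).choose r)) := hkey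
        field_simp at hk'
        linear_combination ((q:ℝ)+1)*(((q:ℝ)-(p:ℝ))+1) * hk'
      push_cast at goal2 ⊢
      linarith [goal2]

theorem sti_knn_coefficient_D (n k j : ℕ)
    (hk : 1 ≤ k) (hj : k + 1 < j) (hjn : j ≤ n) :
    ∑ s ∈ Finset.Icc (k - 1) (n - 3),
        ((j - 3).choose (k - 1) : ℝ) * ((n - j).choose (s + 1 - k)) *
          (1 / ((n - 1).choose s) + 1 / ((n - 1).choose (s + 1))) =
      (n : ℝ) * ((j : ℝ) - k - 1) / (((j : ℝ) - 2) * ((j : ℝ) - 1)) := by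
  have h3 : 3 ≤ j := by omega
  have hn : 3 ≤ n := by omega
  have hne1 : (n:ℝ) - 1 ≠ 0 := by
    have : (3:ℝ) ≤ (n:ℝ) := by exact_mod_cast hn
    linarith
  have stepA : ∀ s ∈ Finset.Icc (k-1) (n-3),
      ((j-3).choose (k-1) : ℝ) * ((n-j).choose (s+1-k)) *
        (1/((n-1).choose s) + 1/((n-1).choose (s+1)))
      = ((j-3).choose (k-1) : ℝ) * ((n:ℝ)/((n:ℝ)-1)) *
          (((n-j).choose (s+1-k) : ℝ) / ((n-2).choose s)) := by
    intro s hs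
    simp only [Finset.mem_Icc] at hs
    have h1 : s + 1 ≤ n - 1 := by omega
    have hkey := sti_real_key (n-1) s h1
    rw [show (n-1)-1 = n-2 from by omega] at hkey
    have c1 : ((n-1 : ℕ):ℝ) = (n:ℝ) - 1 := by
      push_cast [Nat.cast_sub (show 1 ≤ n by omega)]; ring
    rw [c1] at hkey
    rw [hkey]
    have hc2 : ((n-2).choose s : ℝ) ≠ 0 := by
      have : 0 < (n-2).choose s := Nat.choose_pos (by omega)
      positivity
    field_simp
    ring
  rw [Finset.sum_congr rfl stepA,
    show Finset.Icc (k-1) (n-3) = Finset.Ico (k-1) (n-2) from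
      by rw [← Finset.Ico_add_one_right_eq_Icc]; congr 1; omega,
    Finset.sum_Ico_eq_sum_range]
  rw [show (n-2)-(k-1) = n-1-k from by omega]
  have stepB : ∀ i ∈ Finset.range (n-1-k),
      ((j-3).choose (k-1) : ℝ) * ((n:ℝ)/((n:ℝ)-1)) *
          (((n-j).choose ((k-1+i)+1-k) : ℝ) / ((n-2).choose (k-1+i)))
      = ((j-3).choose (k-1) : ℝ) * ((n:ℝ)/((n:ℝ)-1)) *
          (((n-j).choose i : ℝ) / ((n-2).choose (i+(k-1)))) := by
    intro i _
    rw [show (k-1+i)+1-k = i from by omega, show k-1+i = i+(k-1) from by omega]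
  rw [Finset.sum_congr rfl stepB, ← Finset.mul_sum]
  have hsub : ∑ i ∈ Finset.range (n-1-k), (((n-j).choose i : ℝ) / ((n-2).choose (i+(k-1))))
      = ∑ i ∈ Finset.range ((n-j)+1), (((n-j).choose i : ℝ) / ((n-2).choose (i+(k-1)))) := by
    refine (Finset.sum_subset ?_ ?_).symm
    · intro x hx
      simp only [Finset.mem_range] at hx ⊢
      omega
    · intro x _ hx
      simp only [Finset.mem_range, not_lt] at hx
      rw [Nat.choose_eq_zero_of_lt (by omega)]
      simp
  rw [hsub, sti_aux (n-2) (n-j) (k-1) (by omega)]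
  rw [show (n-2)-(n-j) = j-2 from by omega]
  have c2 : ((n-2:ℕ):ℝ) = (n:ℝ)-2 := by
    push_cast [Nat.cast_sub (show 2 ≤ n by omega)]; ring
  have c3 : ((n-j:ℕ):ℝ) = (n:ℝ)-(j:ℝ) := by
    push_cast [Nat.cast_sub hjn]; ring
  rw [c2, c3]
  have hnat : (j-3).choose (k-1) * (j-2) = (j-2).choose (k-1) * (j-(k+1)) := by
    have := Nat.choose_mul_succ_eq (j-3) (k-1)
    rw [show j-3+1 = j-2 from by omega, show j-2-(k-1) = j-(k+1) from by omega] at this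
    exact this
  have hnat' : ((j-3).choose (k-1) : ℝ) * ((j:ℝ)-2) = ((j-2).choose (k-1):ℝ) * ((j:ℝ)-(k:ℝ)-1) := by
    have := congrArg (Nat.cast (R := ℝ)) hnat
    push_cast [Nat.cast_sub (show 2 ≤ j by omega), Nat.cast_sub (show k+1 ≤ j by omega)] at this
    linarith [this]
  have hj1 : (j:ℝ) - 1 ≠ 0 := by
    have : (3:ℝ) ≤ (j:ℝ) := by exact_mod_cast h3
    linarith
  have hj2 : (j:ℝ) - 2 ≠ 0 := by
    have : (3:ℝ) ≤ (j:ℝ) := by exact_mod_cast h3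
    linarith
  have hcc : ((j-2).choose (k-1) : ℝ) ≠ 0 := by
    have : 0 < (j-2).choose (k-1) := Nat.choose_pos (by omega)
    positivity
  have hden : ((n:ℝ)-2)+1-((n:ℝ)-(j:ℝ)) = (j:ℝ)-1 := by ring
  rw [hden, show (n:ℝ)-2+1 = (n:ℝ)-1 from by ring]
  field_simp
  linear_combination hnat'
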